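/- Let q be a positive integer, z ∈ ℝ^q, S a symmetric positive semidefinite real q × q matrix, c > 0 a real number, and set ρ = (zᵀSz)/(c + zᵀSz). Let Y, A, B, A₀, B₀ be square-integrable real-valued random variables on a probability space, define T = A + ρ·(Y − A) and M = B + ρ·(Y − B), and set σ̃² = E[(Y−T)²] + E[(Y−M)²]. Then |E[(Y−T)²] − E[(Y−M)²]| ≤ 12·σ̃·√( max{ E[(A−A₀)²], E[(B−B₀)²], E[(A₀−B₀)²] } ). -/

import Mathlib

open MeasureTheory ProbabilityTheory Matrix

section Aux
variable {Ω : Type*} [MeasurableSpace Ω] {μ : Measure Ω}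

private lemma memL1_mul {f g : Ω → ℝ} (hf : MemLp f 2 μ) (hg : MemLp g 2 μ) :
    Integrable (fun ω => f ω * g ω) μ := by
  rw [← memLp_one_iff_integrable]
  have := hg.smul (𝕜 := ℝ) hf (p := 2) (q := 2) (r := 1)
    (hpqr := ⟨by rw [inv_one]; exact ENNReal.inv_two_add_inv_two⟩)
  exact this

private lemma cs_int {f g : Ω → ℝ} (hf : MemLp f 2 μ) (hg : MemLp g 2 μ) :
    |∫ ω, f ω * g ω ∂μ| ≤ Real.sqrt (∫ ω, f ω ^ 2 ∂μ) * Real.sqrt (∫ ω, g ω ^ 2 ∂μ) := by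
  have h2 : (2 : ℝ).HolderConjugate 2 := Real.HolderConjugate.two_two
  have hf' : MemLp f (ENNReal.ofReal 2) μ := by simpa [ENNReal.ofReal_ofNat] using hf
  have hg' : MemLp g (ENNReal.ofReal 2) μ := by simpa [ENNReal.ofReal_ofNat] using hg
  have key := MeasureTheory.integral_mul_norm_le_Lp_mul_Lq (f := f) (g := g) h2 hf' hg'
  have h1 : |∫ ω, f ω * g ω ∂μ| ≤ ∫ ω, ‖f ω‖ * ‖g ω‖ ∂μ := by
    calc |∫ ω, f ω * g ω ∂μ| ≤ ∫ ω, ‖f ω * g ω‖ ∂μ := by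
          simpa [Real.norm_eq_abs] using
            norm_integral_le_integral_norm (μ := μ) (f := fun ω => f ω * g ω)
      _ = ∫ ω, ‖f ω‖ * ‖g ω‖ ∂μ := by simp [norm_mul]
  refine h1.trans (key.trans_eq ?_)
  have hfe : (∫ ω, ‖f ω‖ ^ (2:ℝ) ∂μ) = ∫ ω, f ω ^ 2 ∂μ := by
    refine integral_congr_ae (Filter.Eventually.of_forall fun ω => ?_)
    show ‖f ω‖ ^ (2:ℝ) = f ω ^ 2
    rw [show ((2:ℝ)) = ((2:ℕ):ℝ) by norm_num, Real.rpow_natCast]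
    simp [Real.norm_eq_abs, sq_abs]
  have hge : (∫ ω, ‖g ω‖ ^ (2:ℝ) ∂μ) = ∫ ω, g ω ^ 2 ∂μ := by
    refine integral_congr_ae (Filter.Eventually.of_forall fun ω => ?_)
    show ‖g ω‖ ^ (2:ℝ) = g ω ^ 2
    rw [show ((2:ℝ)) = ((2:ℕ):ℝ) by norm_num, Real.rpow_natCast]
    simp [Real.norm_eq_abs, sq_abs]
  rw [hfe, hge, Real.sqrt_eq_rpow, Real.sqrt_eq_rpow]

private lemma sqrt_int_add_le {a b : Ω → ℝ} (ha : MemLp a 2 μ) (hb : MemLp b 2 μ) :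
    Real.sqrt (∫ ω, (a ω + b ω) ^ 2 ∂μ) ≤
      Real.sqrt (∫ ω, a ω ^ 2 ∂μ) + Real.sqrt (∫ ω, b ω ^ 2 ∂μ) := by
  set Na := Real.sqrt (∫ ω, a ω ^ 2 ∂μ) with hNa
  set Nb := Real.sqrt (∫ ω, b ω ^ 2 ∂μ) with hNb
  have hNa0 : 0 ≤ Na := Real.sqrt_nonneg _
  have hNb0 : 0 ≤ Nb := Real.sqrt_nonneg _
  have ha2 : (∫ ω, a ω ^ 2 ∂μ) = Na ^ 2 := by
    rw [hNa, Real.sq_sqrt (integral_nonneg fun ω => sq_nonneg _)]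
  have hb2 : (∫ ω, b ω ^ 2 ∂μ) = Nb ^ 2 := by
    rw [hNb, Real.sq_sqrt (integral_nonneg fun ω => sq_nonneg _)]
  have hab : (∫ ω, a ω * b ω ∂μ) ≤ Na * Nb :=
    (le_abs_self _).trans (cs_int ha hb)
  have hexp : (∫ ω, (a ω + b ω) ^ 2 ∂μ) =
      (∫ ω, a ω ^ 2 ∂μ) + 2 * (∫ ω, a ω * b ω ∂μ) + ∫ ω, b ω ^ 2 ∂μ := by
    have h1 : (∫ ω, (a ω + b ω) ^ 2 ∂μ) =
        ∫ ω, (a ω ^ 2 + 2 * (a ω * b ω) + b ω ^ 2) ∂μ :=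
      integral_congr_ae (Filter.Eventually.of_forall fun ω => by ring)
    have i1 : Integrable (fun ω => a ω ^ 2) μ := ha.integrable_sq
    have i2 : Integrable (fun ω => 2 * (a ω * b ω)) μ := (memL1_mul ha hb).const_mul 2
    have i3 : Integrable (fun ω => b ω ^ 2) μ := hb.integrable_sq
    have i12 : Integrable (fun ω => a ω ^ 2 + 2 * (a ω * b ω)) μ := i1.add i2
    rw [h1, integral_add i12 i3, integral_add i1 i2, integral_const_mul]
  have hle : (∫ ω, (a ω + b ω) ^ 2 ∂μ) ≤ (Na + Nb) ^ 2 := by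
    rw [hexp, ha2, hb2]; nlinarith
  calc Real.sqrt (∫ ω, (a ω + b ω) ^ 2 ∂μ) ≤ Real.sqrt ((Na + Nb) ^ 2) :=
        Real.sqrt_le_sqrt hle
    _ = Na + Nb := Real.sqrt_sq (by linarith)

end Aux

/-- With shrinkage factor `ρ = zᵀSz/(c + zᵀSz)` (`S` PSD, `c > 0`), predictors
`T = A + ρ(Y−A)`, `M = B + ρ(Y−B)`, and `σ̃² = E[(Y−T)²] + E[(Y−M)²]`, one has
`|E[(Y−T)²] − E[(Y−M)²]| ≤ 12·σ̃·√(max{E[(A−A₀)²], E[(B−B₀)²], E[(A₀−B₀)²]})`. -/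
theorem mspe_diff_le_twelve_sigma_sqrt_max
    {q : ℕ} (hq : 0 < q) (z : Fin q → ℝ) (S : Matrix (Fin q) (Fin q) ℝ)
    (hS : S.PosSemidef) (c : ℝ) (hc : 0 < c)
    (ρ : ℝ) (hρ : ρ = z ⬝ᵥ S.mulVec z / (c + z ⬝ᵥ S.mulVec z))
    {Ω : Type*} [MeasureSpace Ω] [IsProbabilityMeasure (ℙ : Measure Ω)]
    (Y A B A₀ B₀ : Ω → ℝ)
    (hY : MemLp Y 2 ℙ) (hA : MemLp A 2 ℙ) (hB : MemLp B 2 ℙ)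
    (hA₀ : MemLp A₀ 2 ℙ) (hB₀ : MemLp B₀ 2 ℙ)
    (T M : Ω → ℝ)
    (hT : ∀ ω, T ω = A ω + ρ * (Y ω - A ω))
    (hM : ∀ ω, M ω = B ω + ρ * (Y ω - B ω))
    (σ : ℝ) (hσ : 0 ≤ σ)
    (hσ2 : σ ^ 2 = (∫ ω, (Y ω - T ω) ^ 2) + ∫ ω, (Y ω - M ω) ^ 2) :
    |(∫ ω, (Y ω - T ω) ^ 2) - ∫ ω, (Y ω - M ω) ^ 2| ≤
      12 * σ * Real.sqrt (max (max (∫ ω, (A ω - A₀ ω) ^ 2) (∫ ω, (B ω - B₀ ω) ^ 2))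
        (∫ ω, (A₀ ω - B₀ ω) ^ 2)) := by
  -- bounds on ρ
  have ht0 : 0 ≤ z ⬝ᵥ S.mulVec z := by simpa using hS.dotProduct_mulVec_nonneg z
  have hden : 0 < c + z ⬝ᵥ S.mulVec z := by linarith
  have hρ0 : 0 ≤ ρ := hρ ▸ div_nonneg ht0 hden.le
  have hρ1 : ρ ≤ 1 := hρ ▸ (div_le_one hden).mpr (by linarith)
  set κ := 1 - ρ with hκdef
  have hκ0 : 0 ≤ κ := by simp [hκdef]; linarith
  have hκ1 : κ ≤ 1 := by simp [hκdef]; linarith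
  set f : Ω → ℝ := fun ω => Y ω - A ω with hf
  set g : Ω → ℝ := fun ω => Y ω - B ω with hg
  have hf2 : MemLp f 2 ℙ := hY.sub hA
  have hg2 : MemLp g 2 ℙ := hY.sub hB
  have hu2 : MemLp (fun ω => κ * f ω) 2 ℙ := hf2.const_mul κ
  have hv2 : MemLp (fun ω => κ * g ω) 2 ℙ := hg2.const_mul κ
  -- rewrite the two MSPE integrals
  have hI1 : (∫ ω, (Y ω - T ω) ^ 2) = ∫ ω, (κ * f ω) ^ 2 :=
    integral_congr_ae (Filter.Eventually.of_forall fun ω => by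
      simp only [hT ω, hf, hκdef]; ring)
  have hI2 : (∫ ω, (Y ω - M ω) ^ 2) = ∫ ω, (κ * g ω) ^ 2 :=
    integral_congr_ae (Filter.Eventually.of_forall fun ω => by
      simp only [hM ω, hg, hκdef]; ring)
  rw [hI1, hI2]
  rw [hI1, hI2] at hσ2
  set maxE := max (max (∫ ω, (A ω - A₀ ω) ^ 2) (∫ ω, (B ω - B₀ ω) ^ 2))
    (∫ ω, (A₀ ω - B₀ ω) ^ 2) with hmaxE
  have hmax0 : 0 ≤ maxE :=
    le_max_of_le_right (integral_nonneg fun ω => sq_nonneg _)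
  -- difference of squares
  set P : Ω → ℝ := fun ω => κ * f ω + κ * g ω with hP
  set Q : Ω → ℝ := fun ω => κ * f ω - κ * g ω with hQ
  have hP2 : MemLp P 2 ℙ := hu2.add hv2
  have hQ2 : MemLp Q 2 ℙ := hu2.sub hv2
  have hdiff : (∫ ω, (κ * f ω) ^ 2) - (∫ ω, (κ * g ω) ^ 2) = ∫ ω, P ω * Q ω := by
    rw [← integral_sub hu2.integrable_sq hv2.integrable_sq]
    exact integral_congr_ae (Filter.Eventually.of_forall fun ω => by
      simp only [hP, hQ]; ring)
  rw [hdiff]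
  have hcs : |∫ ω, P ω * Q ω| ≤
      Real.sqrt (∫ ω, P ω ^ 2) * Real.sqrt (∫ ω, Q ω ^ 2) := cs_int hP2 hQ2
  -- bound √∫P²  by 2σ
  have hPσ : Real.sqrt (∫ ω, P ω ^ 2) ≤ 2 * σ := by
    have hmono : (∫ ω, P ω ^ 2) ≤ ∫ ω, (2 * (κ * f ω) ^ 2 + 2 * (κ * g ω) ^ 2) := by
      refine integral_mono hP2.integrable_sq
        ((hu2.integrable_sq.const_mul 2).add (hv2.integrable_sq.const_mul 2))
        fun ω => ?_
      simp only [hP]; nlinarith [sq_nonneg (κ * f ω - κ * g ω)]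
    have hval : (∫ ω, (2 * (κ * f ω) ^ 2 + 2 * (κ * g ω) ^ 2)) = 2 * σ ^ 2 := by
      have j1 : Integrable (fun ω => 2 * (κ * f ω) ^ 2) ℙ := hu2.integrable_sq.const_mul 2
      have j2 : Integrable (fun ω => 2 * (κ * g ω) ^ 2) ℙ := hv2.integrable_sq.const_mul 2
      rw [integral_add j1 j2, integral_const_mul, integral_const_mul, hσ2]
      ring
    calc Real.sqrt (∫ ω, P ω ^ 2) ≤ Real.sqrt ((2 * σ) ^ 2) := by
          refine Real.sqrt_le_sqrt ?_
          rw [hval] at hmono; nlinarith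
      _ = 2 * σ := Real.sqrt_sq (by linarith)
  -- bound √∫Q²  by 3√maxE
  have hQm : Real.sqrt (∫ ω, Q ω ^ 2) ≤ 3 * Real.sqrt maxE := by
    have hQR : (∫ ω, Q ω ^ 2) ≤
        ∫ ω, ((B ω - B₀ ω) + ((B₀ ω - A₀ ω) + (A₀ ω - A ω))) ^ 2 := by
      have hRint : Integrable (fun ω => ((B ω - B₀ ω) + ((B₀ ω - A₀ ω) + (A₀ ω - A ω))) ^ 2) ℙ :=
        ((hB.sub hB₀).add ((hB₀.sub hA₀).add (hA₀.sub hA))).integrable_sq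
      refine integral_mono hQ2.integrable_sq hRint fun ω => ?_
      simp only [hQ, hf, hg]
      have h1 : κ * (Y ω - A ω) - κ * (Y ω - B ω) = κ * (B ω - A ω) := by ring
      have h2 : (κ * (B ω - A ω)) ^ 2 = κ ^ 2 * (B ω - A ω) ^ 2 := by ring
      have hκsq : κ ^ 2 ≤ 1 := by nlinarith
      have h3 : κ ^ 2 * (B ω - A ω) ^ 2 ≤ (B ω - A ω) ^ 2 := by
        nlinarith [mul_nonneg (by linarith : (0:ℝ) ≤ 1 - κ ^ 2) (sq_nonneg (B ω - A ω))]
      calc (κ * (Y ω - A ω) - κ * (Y ω - B ω)) ^ 2 = κ ^ 2 * (B ω - A ω) ^ 2 := by ring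
        _ ≤ (B ω - A ω) ^ 2 := h3
        _ = ((B ω - B₀ ω) + ((B₀ ω - A₀ ω) + (A₀ ω - A ω))) ^ 2 := by ring
    have htri : Real.sqrt (∫ ω, ((B ω - B₀ ω) + ((B₀ ω - A₀ ω) + (A₀ ω - A ω))) ^ 2) ≤
        Real.sqrt (∫ ω, (B ω - B₀ ω) ^ 2) +
          (Real.sqrt (∫ ω, (B₀ ω - A₀ ω) ^ 2) + Real.sqrt (∫ ω, (A₀ ω - A ω) ^ 2)) := by
      refine (sqrt_int_add_le (hB.sub hB₀) ((hB₀.sub hA₀).add (hA₀.sub hA))).trans ?_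
      exact add_le_add_right (sqrt_int_add_le (hB₀.sub hA₀) (hA₀.sub hA)) _
    have e1 : (∫ ω, (B₀ ω - A₀ ω) ^ 2) = ∫ ω, (A₀ ω - B₀ ω) ^ 2 :=
      integral_congr_ae (Filter.Eventually.of_forall fun ω => by ring)
    have e2 : (∫ ω, (A₀ ω - A ω) ^ 2) = ∫ ω, (A ω - A₀ ω) ^ 2 :=
      integral_congr_ae (Filter.Eventually.of_forall fun ω => by ring)
    have m1 : Real.sqrt (∫ ω, (B ω - B₀ ω) ^ 2) ≤ Real.sqrt maxE :=
      Real.sqrt_le_sqrt (le_max_of_le_left (le_max_right _ _))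
    have m2 : Real.sqrt (∫ ω, (B₀ ω - A₀ ω) ^ 2) ≤ Real.sqrt maxE := by
      rw [e1]; exact Real.sqrt_le_sqrt (le_max_right _ _)
    have m3 : Real.sqrt (∫ ω, (A₀ ω - A ω) ^ 2) ≤ Real.sqrt maxE := by
      rw [e2]; exact Real.sqrt_le_sqrt (le_max_of_le_left (le_max_left _ _))
    calc Real.sqrt (∫ ω, Q ω ^ 2)
        ≤ Real.sqrt (∫ ω, ((B ω - B₀ ω) + ((B₀ ω - A₀ ω) + (A₀ ω - A ω))) ^ 2) :=
          Real.sqrt_le_sqrt hQR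
      _ ≤ _ := htri
      _ ≤ 3 * Real.sqrt maxE := by linarith
  have hsm : 0 ≤ Real.sqrt maxE := Real.sqrt_nonneg _
  have hP0 : 0 ≤ Real.sqrt (∫ ω, P ω ^ 2) := Real.sqrt_nonneg _
  have hQ0 : 0 ≤ Real.sqrt (∫ ω, Q ω ^ 2) := Real.sqrt_nonneg _
  calc |∫ ω, P ω * Q ω| ≤ Real.sqrt (∫ ω, P ω ^ 2) * Real.sqrt (∫ ω, Q ω ^ 2) := hcs
    _ ≤ (2 * σ) * (3 * Real.sqrt maxE) := by
        exact mul_le_mul hPσ hQm hQ0 (by linarith)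
    _ ≤ 12 * σ * Real.sqrt maxE := by nlinarith [mul_nonneg hσ hsm]
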